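/- Let n ≥ 1 and a ∈ [(n-2)/(n+2), 1). Let R be analytic on 𝔻 with R' never zero and Re(z R''(z)/R'(z)) > -(n+2)/2 on 𝔻, and define S by S'(z) = e^{iθ} z^n R'(z) for a fixed θ ∈ ℝ. Then the function ŵ(z) = (2a S'(z) - (1-a) z S''(z)) / (2 R'(z) + (1-a) z R''(z)) satisfies |ŵ(z)| ≤ |z|^n < 1 for all z ∈ 𝔻. -/

import Mathlib

open Metric Complex in
theorem stmt_8 (n : ℕ) (hn : 1 ≤ n) (a : ℝ)
    (ha₁ : ((n : ℝ) - 2) / ((n : ℝ) + 2) ≤ a) (ha₂ : a < 1) (θ : ℝ)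
    (R' R'' S'' : ℂ → ℂ)
    (hR'' : ∀ z ∈ ball (0 : ℂ) 1, HasDerivAt R' (R'' z) z)
    (hR'ne : ∀ z ∈ ball (0 : ℂ) 1, R' z ≠ 0)
    (hre : ∀ z ∈ ball (0 : ℂ) 1, (z * R'' z / R' z).re > -(((n : ℝ) + 2) / 2))
    (hS'' : ∀ z ∈ ball (0 : ℂ) 1,
      HasDerivAt (fun w => Complex.exp (θ * Complex.I) * w ^ n * R' w) (S'' z) z) :
    ∀ z ∈ ball (0 : ℂ) 1,
      ‖(2 * a * (Complex.exp (θ * Complex.I) * z ^ n * R' z)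
          - (1 - a) * z * S'' z) /
        (2 * R' z + (1 - a) * z * R'' z)‖ ≤ ‖z‖ ^ n ∧
      ‖z‖ ^ n < 1 := by
  intro z hz
  have hz1 : ‖z‖ < 1 := by simpa [Complex.dist_eq] using hz
  have habs : ‖z‖ ^ n < 1 :=
    pow_lt_one₀ (norm_nonneg z) hz1 (by omega)
  refine ⟨?_, habs⟩
  set C := Complex.exp (θ * Complex.I) with hCdef
  have hC : ‖C‖ = 1 := by simp [hCdef, Complex.norm_exp]
  have hR : R' z ≠ 0 := hR'ne z hz
  -- identify S'' z
  have h1 : HasDerivAt (fun w : ℂ => C * w ^ n) (C * (n * z ^ (n - 1))) z :=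
    (hasDerivAt_pow n z).const_mul C
  have hd := h1.mul (hR'' z hz)
  have hS : S'' z = C * (↑n * z ^ (n - 1)) * R' z + C * z ^ n * R'' z :=
    (hS'' z hz).unique hd
  set b : ℝ := 1 - a with hbdef
  set c : ℝ := ((n : ℝ) + 2) * a - n with hcdef
  set u : ℂ := z * R'' z / R' z with hudef
  have hzR : u * R' z = z * R'' z := div_mul_cancel₀ _ hR
  have hzn : z * z ^ (n - 1) = z ^ n := by
    rw [← pow_succ']; congr 1; omega
  have hb0 : (0 : ℝ) < b := by simp [hbdef]; linarith
  have hn2 : (0 : ℝ) < (n : ℝ) + 2 := by positivity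
  have ha₁' : (n : ℝ) - 2 ≤ a * ((n : ℝ) + 2) := (div_le_iff₀ hn2).mp ha₁
  have hc2 : 0 ≤ c + 2 := by simp only [hcdef]; nlinarith
  have hc2' : c - 2 = -((n : ℝ) + 2) * b := by simp only [hcdef, hbdef]; ring
  have hx : -(((n : ℝ) + 2) / 2) < u.re := hre z hz
  -- denominator has positive real part
  have hbsmall : b * ((n : ℝ) + 2) ≤ 4 := by simp only [hbdef]; nlinarith
  have hbure : (↑b * u).re = b * u.re := by simp
  have hDre : 0 < ((2 : ℂ) + ↑b * u).re := by
    have hbu : -2 < b * u.re := by nlinarith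
    simp only [Complex.add_re, hbure]
    norm_num
    linarith
  have hD : (2 : ℂ) + ↑b * u ≠ 0 := by
    intro h; rw [h] at hDre; simp at hDre
  -- key modulus inequality
  have h2pos : 0 ≤ 2 + 2 * b * u.re - c := by
    have : 0 < b * ((n : ℝ) + 2 + 2 * u.re) :=
      mul_pos hb0 (by linarith)
    nlinarith
  have hsq : Complex.normSq (↑c - ↑b * u) ≤ Complex.normSq ((2 : ℂ) + ↑b * u) := by
    simp only [Complex.normSq_apply, Complex.sub_re, Complex.sub_im, Complex.add_re,
      Complex.add_im, Complex.mul_re, Complex.mul_im, Complex.ofReal_re,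
      Complex.ofReal_im, Complex.re_ofNat, Complex.im_ofNat]
    nlinarith [mul_nonneg hc2 h2pos, sq_nonneg u.im]
  have hle : ‖(↑c - ↑b * u : ℂ)‖ ≤ ‖(2 : ℂ) + ↑b * u‖ := by
    rw [Complex.norm_def, Complex.norm_def]
    exact Real.sqrt_le_sqrt hsq
  -- rewrite numerator and denominator
  have hnum : 2 * (a : ℂ) * (C * z ^ n * R' z) - (1 - (a : ℂ)) * z * S'' z
      = R' z * (C * z ^ n * (↑c - ↑b * u)) := by
    rw [hS]
    simp only [hcdef, hbdef]
    push_cast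
    linear_combination (-(1 - (a : ℂ)) * n * C * R' z) * hzn
      + ((1 - (a : ℂ)) * C * z ^ n) * hzR
  have hden : 2 * R' z + (1 - (a : ℂ)) * z * R'' z = R' z * ((2 : ℂ) + ↑b * u) := by
    simp only [hbdef]
    push_cast
    linear_combination (-(1 - (a : ℂ))) * hzR
  rw [hnum, hden, mul_div_mul_left _ _ hR]
  rw [mul_div_assoc, norm_mul, norm_mul, hC, one_mul, norm_pow, norm_div]
  have hDpos : 0 < ‖(2 : ℂ) + ↑b * u‖ := norm_pos_iff.mpr hD
  calc ‖z‖ ^ n * (‖(↑c - ↑b * u : ℂ)‖ / ‖(2 : ℂ) + ↑b * u‖)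
      ≤ ‖z‖ ^ n * 1 := by
        apply mul_le_mul_of_nonneg_left _ (by positivity)
        exact (div_le_one hDpos).mpr hle
    _ = ‖z‖ ^ n := mul_one _
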